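/- Let x be an infinite binary word and a ∈ {0,1}. Then the infinite word a·a·μ(x) is overlap-free if and only if ā·x is overlap-free and x begins with the three letters ā, a, ā, where ā = 1 − a denotes the complementary letter. -/

import Mathlib

/-- An overlap: a word of the form a x a x a, with `a` a single letter. -/
def Overlap (w : List (Fin 2)) : Prop :=
  ∃ (a : Fin 2) (x : List (Fin 2)), w = [a] ++ x ++ [a] ++ x ++ [a]

/-- `w` occurs as a (contiguous) factor of the infinite word `x`. -/
def FactorOf (w : List (Fin 2)) (x : ℕ → Fin 2) : Prop :=
  ∃ i, w = (List.range w.length).map (fun j => x (i + j))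

/-- An infinite binary word is overlap-free if no finite factor is an overlap. -/
def OverlapFree (x : ℕ → Fin 2) : Prop :=
  ∀ w, FactorOf w x → ¬ Overlap w

/-- The Thue–Morse morphism applied to an infinite word. -/
def mu (x : ℕ → Fin 2) : ℕ → Fin 2 :=
  fun n => if n % 2 = 0 then x (n / 2) else 1 - x (n / 2)

/-- Prepend a finite word to an infinite word. -/
def prepend (p : List (Fin 2)) (w : ℕ → Fin 2) : ℕ → Fin 2 :=
  fun n => if h : n < p.length then p.get ⟨n, h⟩ else w (n - p.length)

/-- `x` begins with the finite word `p`. -/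
def BeginsWith (x : ℕ → Fin 2) (p : List (Fin 2)) : Prop :=
  ∀ i < p.length, x i = p.getD i 0

def HasOverlapAt (y : ℕ → Fin 2) (i p : ℕ) : Prop := ∀ j ≤ p, y (i+j) = y (i+j+p)

lemma map_range_inj {α : Type*} {f g : ℕ → α} {n : ℕ}
    (h : (List.range n).map f = (List.range n).map g) : ∀ j < n, f j = g j := by
  intro j hj
  have h1 : ((List.range n).map f)[j]'(by simpa using hj) =
      ((List.range n).map g)[j]'(by simpa using hj) := by
    congr 1
  simpa using h1

lemma map_range_shift {α : Type*} (f : ℕ → α) (m n : ℕ) :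
    (List.range (m + n)).map f = (List.range m).map f ++ (List.range n).map (fun j => f (m + j)) := by
  rw [List.range_add, List.map_append, List.map_map]
  rfl

/-- build an overlap factor from a pointwise period. -/
lemma period_factor {y : ℕ → Fin 2} {i p : ℕ} (hp : 0 < p) (h : HasOverlapAt y i p) :
    ∃ w, FactorOf w y ∧ Overlap w := by
  set f : ℕ → Fin 2 := fun j => y (i + j) with hf
  refine ⟨(List.range (2*p+1)).map f, ⟨i, by simp [hf]⟩, f 0, (List.range (p-1)).map (fun j => f (j+1)), ?_⟩
  have key : ∀ j ≤ p, f j = f (j + p) := by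
    intro j hj
    have := h j hj
    simpa [hf, Nat.add_assoc] using this
  have hA : (List.range p).map f = [f 0] ++ (List.range (p-1)).map (fun j => f (j+1)) := by
    obtain ⟨q, rfl⟩ : ∃ q, p = q + 1 := ⟨p - 1, by omega⟩
    rw [List.range_succ_eq_map, List.map_cons, List.map_map]
    simp [Nat.add_comm]
  have h2 : (List.range (2*p+1)).map f
      = (List.range p).map f ++ ((List.range p).map f ++ [f 0]) := by
    have e1 : 2*p+1 = p + (p+1) := by omega
    rw [e1, map_range_shift]
    congr 1
    rw [List.range_succ, List.map_append]
    congr 1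
    · apply List.map_congr_left
      intro j hj
      rw [List.mem_range] at hj
      have := key j (le_of_lt hj)
      rw [Nat.add_comm] at this
      exact this.symm
    · simp only [List.map_cons, List.map_nil]
      congr 1
      have h1 := key 0 (Nat.zero_le _)
      have h2 := key p le_rfl
      simp only [Nat.zero_add] at h1
      rw [← h2, ← h1]
  rw [h2, hA]
  simp

lemma split_lemma {α : Type*} (f : ℕ → α) (p : ℕ) :
    (List.range (2*p+1)).map f
      = (List.range p).map f ++ ((List.range p).map (fun j => f (p+j)) ++ [f (p+p)]) := by
  have e1 : 2*p+1 = p + (p+1) := by omega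
  rw [e1, map_range_shift, List.range_succ, List.map_append]
  rfl

lemma factor_period {w : List (Fin 2)} {y : ℕ → Fin 2} (hF : FactorOf w y) (hO : Overlap w) :
    ∃ i p, 0 < p ∧ HasOverlapAt y i p := by
  obtain ⟨c, u, rfl⟩ := hO
  obtain ⟨i, hw⟩ := hF
  set p := u.length + 1 with hp
  refine ⟨i, p, by omega, ?_⟩
  set f : ℕ → Fin 2 := fun j => y (i + j) with hf
  have hlen : ([c] ++ u ++ [c] ++ u ++ [c]).length = 2*p+1 := by
    simp [hp]; omega
  rw [hlen] at hw
  have split := split_lemma f p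
  have hw' : ([c] ++ u) ++ (([c] ++ u) ++ [c])
      = (List.range p).map f ++ ((List.range p).map (fun j => f (p+j)) ++ [f (p+p)]) := by
    rw [← split, ← hw]
    simp
  have hl1 : ([c] ++ u).length = ((List.range p).map f).length := by simp [hp]
  obtain ⟨h1, hrest⟩ := List.append_inj hw' (by simpa using hl1)
  have hl2 : ([c] ++ u).length = ((List.range p).map (fun j => f (p+j))).length := by simp [hp]
  obtain ⟨h2, h3⟩ := List.append_inj hrest (by simpa using hl2)
  -- extract pointwise facts
  have hper : ∀ j < p, f j = f (p + j) := by
    apply map_range_inj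
    rw [← h1, ← h2]
  have hc1 : c = f 0 := by
    rw [hp, List.range_succ_eq_map, List.map_cons] at h1
    simpa using congrArg List.head? h1
  have hc2 : c = f p := by
    rw [hp, List.range_succ_eq_map, List.map_cons] at h2
    have := congrArg List.head? h2
    simpa using this
  have hc3 : c = f (p + p) := by simpa using h3
  intro j hj
  rcases Nat.lt_or_ge j p with hlt | hge
  · have := hper j hlt
    rw [hf] at this
    simp only at this
    rw [show i + j + p = i + (p + j) by omega]
    exact this
  · have hjp : j = p := by omega
    subst hjp
    have : f p = f (p + p) := hc2.symm.trans hc3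
    rw [hf] at this
    simp only at this
    rw [show i + p + p = i + (p + p) by omega]
    exact this

lemma overlapFree_iff (y : ℕ → Fin 2) :
    OverlapFree y ↔ ∀ i p, 0 < p → ¬ HasOverlapAt y i p := by
  constructor
  · intro h i p hp hov
    obtain ⟨w, hF, hO⟩ := period_factor hp hov
    exact h w hF hO
  · intro h w hF hO
    obtain ⟨i, p, hp, hov⟩ := factor_period hF hO
    exact h i p hp hov

lemma mu_two (z : ℕ → Fin 2) (k : ℕ) : mu z (2*k) = z k := by
  simp [mu, Nat.mul_mod_right, Nat.mul_div_cancel_left]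

lemma mu_odd (z : ℕ → Fin 2) (k : ℕ) : mu z (2*k+1) = 1 - z k := by
  have h1 : (2*k+1) % 2 = 1 := by omega
  have h2 : (2*k+1) / 2 = k := by omega
  simp [mu, h1, h2]

lemma fin2_ne (a : Fin 2) : a ≠ 1 - a := by revert a; decide
lemma fin2_sub_sub (a : Fin 2) : 1 - (1 - a) = a := by revert a; decide
lemma fin2_sub_inj {a b : Fin 2} : 1 - a = 1 - b → a = b := by revert a b; decide
lemma fin2_swap {a b : Fin 2} : a = 1 - b → b = 1 - a := by revert a b; decide
lemma fin2_not_ne {a b : Fin 2} : a ≠ 1 - b → a = b := by revert a b; decide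

lemma mu_overlapFree {z : ℕ → Fin 2} (hz : OverlapFree z) : OverlapFree (mu z) := by
  rw [overlapFree_iff] at hz ⊢
  intro i p hp hov
  have H : ∀ t, i ≤ t → t ≤ i + p → mu z t = mu z (t + p) := by
    intro t h1 h2
    have h3 := hov (t - i) (by omega)
    rw [show i + (t-i) = t by omega] at h3
    exact h3
  rcases Nat.even_or_odd p with ⟨m, hm⟩ | ⟨m, hm⟩
  · -- p even
    have hm0 : 0 < m := by omega
    apply hz (i/2) m hm0
    intro j hj
    rcases Nat.even_or_odd i with ⟨q, hq⟩ | ⟨q, hq⟩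
    · have hq2 : i / 2 = q := by omega
      have ht := H (2*(q+j)) (by omega) (by omega)
      rw [show 2*(q+j) + p = 2*(q+j+m) by omega, mu_two, mu_two] at ht
      rw [hq2]
      exact ht
    · have hq2 : i / 2 = q := by omega
      have ht := H (2*(q+j)+1) (by omega) (by omega)
      rw [show 2*(q+j)+1 + p = 2*(q+j+m)+1 by omega, mu_odd, mu_odd] at ht
      rw [hq2]
      exact fin2_sub_inj ht
  · -- p odd, p = 2m+1
    have E : ∀ s, i ≤ 2*s → 2*s ≤ i + p → z s = 1 - z (s+m) := by
      intro s h1 h2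
      have ht := H (2*s) h1 h2
      rw [show 2*s + p = 2*(s+m)+1 by omega, mu_two, mu_odd] at ht
      exact ht
    have O : ∀ s, i ≤ 2*s+1 → 2*s+1 ≤ i + p → z (s+m+1) = 1 - z s := by
      intro s h1 h2
      have ht := H (2*s+1) h1 h2
      rw [show 2*s+1+p = 2*(s+m+1) by omega, mu_odd, mu_two] at ht
      exact ht.symm
    set s0 := (i+1)/2 with hs0
    rcases Nat.lt_or_ge m 2 with hm2 | hm2
    · rcases Nat.lt_or_ge m 1 with hm1 | hm1
      · -- m = 0, p = 1
        have hm0 : m = 0 := by omega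
        have h1 := E s0 (by omega) (by omega)
        rw [hm0] at h1
        simp at h1
        exact fin2_ne _ h1
      · -- m = 1, p = 3
        have hm1' : m = 1 := by omega
        subst hm1'
        have h1 := E s0 (by omega) (by omega)
        have h2 := E (s0+1) (by omega) (by omega)
        have h3 := O s0 (by omega) (by omega)
        rw [h3, fin2_sub_sub] at h2
        rw [h2] at h1
        exact fin2_ne _ h1
    · -- m ≥ 2
      have h1 : z (s0+m) = z (s0+m+1) := by
        have e1 := E s0 (by omega) (by omega)
        have o1 := O s0 (by omega) (by omega)
        exact (o1.trans (fin2_swap e1).symm).symm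
      have h2 : z (s0+m+1) = z (s0+m+2) := by
        have e1 := E (s0+1) (by omega) (by omega)
        have o1 := O (s0+1) (by omega) (by omega)
        have h := (o1.trans (fin2_swap e1).symm).symm
        rw [show s0 + 1 + m + 1 = s0 + m + 2 by omega] at h
        rw [show s0 + 1 + m = s0 + m + 1 by omega] at h
        exact h
      apply hz (s0+m) 1 one_pos
      intro j hj
      interval_cases j
      · simpa using h1
      · rw [show s0 + m + 1 + 1 = s0 + m + 2 by omega]
        exact h2

lemma fin2_not_eq {a b : Fin 2} : a ≠ b → a = 1 - b := by revert a b; decide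

theorem prepend_aa_mu_overlapFree_iff (x : ℕ → Fin 2) (a : Fin 2) :
    OverlapFree (prepend [a, a] (mu x)) ↔
      (OverlapFree (prepend [1 - a] x) ∧ BeginsWith x [1 - a, a, 1 - a]) := by
  set Y := prepend [a, a] (mu x) with hYdef
  set z := prepend [1 - a] x with hzdef
  have hz0 : z 0 = 1 - a := by simp [hzdef, prepend]
  have hzs : ∀ k, z (k+1) = x k := by intro k; simp [hzdef, prepend]
  have hY0 : Y 0 = a := by simp [hYdef, prepend]
  have hY1 : Y 1 = a := by simp [hYdef, prepend]
  have hYn : ∀ n, Y (n+2) = mu x n := by intro n; simp [hYdef, prepend]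
  have hY2 : Y 2 = x 0 := by have := hYn 0; norm_num [mu] at this; exact this
  have hY3 : Y 3 = 1 - x 0 := by have := hYn 1; norm_num [mu] at this; exact this
  have hY4 : Y 4 = x 1 := by have := hYn 2; norm_num [mu] at this; exact this
  have hY5 : Y 5 = 1 - x 1 := by have := hYn 3; norm_num [mu] at this; exact this
  have hY6 : Y 6 = x 2 := by have := hYn 4; norm_num [mu] at this; exact this
  have hYM : ∀ n, 1 ≤ n → Y n = mu z n := by
    intro n hn
    rcases Nat.even_or_odd n with ⟨k, hk⟩ | ⟨k, hk⟩
    · obtain ⟨k', rfl⟩ : ∃ k', k = k' + 1 := ⟨k-1, by omega⟩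
      have hk2 : n = 2*(k'+1) := by omega
      rw [hk2, mu_two, hzs, show 2*(k'+1) = 2*k'+2 by omega, hYn, mu_two]
    · rcases Nat.eq_zero_or_pos k with hk0 | hk0
      · have hn1 : n = 1 := by omega
        have h1 : mu z 1 = 1 - z 0 := by have := mu_odd z 0; norm_num at this; exact this
        rw [hn1, hY1, h1, hz0, fin2_sub_sub]
      · obtain ⟨k', rfl⟩ : ∃ k', k = k' + 1 := ⟨k-1, by omega⟩
        have hk2 : n = 2*(k'+1)+1 := by omega
        rw [hk2, mu_odd, hzs, show 2*(k'+1)+1 = (2*k'+1)+2 by omega, hYn, mu_odd]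
  constructor
  · intro hY
    rw [overlapFree_iff] at hY
    have hx0 : x 0 = 1 - a := by
      by_contra h
      have hxa := fin2_not_ne h
      apply hY 0 1 one_pos
      intro j hj
      interval_cases j
      · show Y (0+0) = Y (0+0+1)
        norm_num [hY0, hY1]
      · show Y (0+1) = Y (0+1+1)
        norm_num [hY1, hY2, hxa]
    have hx1 : x 1 = a := by
      by_contra h
      have hxa := fin2_not_eq h
      apply hY 1 2 (by omega)
      intro j hj
      interval_cases j
      · show Y (1+0) = Y (1+0+2)
        norm_num [hY1, hY3, hx0, fin2_sub_sub]
      · show Y (1+1) = Y (1+1+2)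
        norm_num [hY2, hY4, hx0, hxa]
      · show Y (1+2) = Y (1+2+2)
        norm_num [hY3, hY5, hx0, hxa]
    have hx2 : x 2 = 1 - a := by
      by_contra h
      have hxa := fin2_not_ne h
      apply hY 0 3 (by omega)
      intro j hj
      interval_cases j
      · show Y (0+0) = Y (0+0+3)
        norm_num [hY0, hY3, hx0, fin2_sub_sub]
      · show Y (0+1) = Y (0+1+3)
        norm_num [hY1, hY4, hx1]
      · show Y (0+2) = Y (0+2+3)
        norm_num [hY2, hY5, hx0, hx1]
      · show Y (0+3) = Y (0+3+3)
        norm_num [hY3, hY6, hx0, hxa, fin2_sub_sub]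
    refine ⟨?_, ?_⟩
    · rw [overlapFree_iff]
      intro i q hq hov
      have hper : ∀ s, i ≤ s → s ≤ i + q → z s = z (s + q) := by
        intro s hs1 hs2
        have := hov (s - i) (by omega)
        rw [show i + (s-i) = s by omega] at this
        exact this
      have Hm : ∀ t, 2*i+1 ≤ t → t ≤ 2*i+1+2*q → mu z t = mu z (t+2*q) := by
        intro t h1 h2
        rcases Nat.even_or_odd t with ⟨s, hs⟩ | ⟨s, hs⟩
        · have h3 : t = 2*s := by omega
          rw [h3, mu_two, show 2*s+2*q = 2*(s+q) by omega, mu_two]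
          exact hper s (by omega) (by omega)
        · have h3 : t = 2*s+1 := by omega
          rw [h3, mu_odd, show 2*s+1+2*q = 2*(s+q)+1 by omega, mu_odd]
          rw [hper s (by omega) (by omega)]
      apply hY (2*i+1) (2*q) (by omega)
      intro j hj
      rw [hYM (2*i+1+j) (by omega), hYM (2*i+1+j+2*q) (by omega)]
      exact Hm (2*i+1+j) (by omega) (by omega)
    · intro i hi
      simp only [List.length_cons, List.length_nil] at hi
      interval_cases i
      · simpa using hx0
      · simpa using hx1
      · simpa using hx2
  · rintro ⟨hzf, hb⟩
    have hx0 : x 0 = 1 - a := by have := hb 0 (by norm_num); simpa using this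
    have hx1 : x 1 = a := by have := hb 1 (by norm_num); simpa using this
    have hx2 : x 2 = 1 - a := by have := hb 2 (by norm_num); simpa using this
    have hM := mu_overlapFree hzf
    rw [overlapFree_iff] at hM
    rw [overlapFree_iff]
    intro i p hp hov
    rcases Nat.eq_zero_or_pos i with hi0 | hi0
    · subst hi0
      have hov' : ∀ j ≤ p, Y j = Y (j+p) := by
        intro j hj
        have := hov j hj
        simpa using this
      rcases Nat.even_or_odd p with ⟨m, hm⟩ | ⟨m, hm⟩
      · -- p = 2m, m ≥ 1
        have hm1 : 0 < m := by omega
        have t0 := hov' 0 (by omega)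
        rw [hY0, show (0:ℕ)+p = 2*m by omega, hYM (2*m) (by omega), mu_two] at t0
        have t1 := hov' 1 (by omega)
        rw [hY1, show (1:ℕ)+p = 2*m+1 by omega, hYM (2*m+1) (by omega), mu_odd] at t1
        rw [← t0] at t1
        exact fin2_ne a t1
      · rcases Nat.lt_or_ge m 2 with hm2 | hm2
        · rcases Nat.lt_or_ge m 1 with hm1 | hm1
          · -- p = 1
            have hp1 : p = 1 := by omega
            have t1 := hov' 1 (by omega)
            rw [hp1] at t1
            norm_num [hY1, hY2, hx0] at t1
            exact fin2_ne a t1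
          · -- p = 3
            have hp3 : p = 3 := by omega
            have t3 := hov' 3 (by omega)
            rw [hp3] at t3
            norm_num [hY3, hY6, hx0, hx2, fin2_sub_sub] at t3
            exact fin2_ne a t3
        · -- p = 2m+1, m ≥ 2
          have Hm : ∀ t, 1 ≤ t → t ≤ p → mu z t = mu z (t+p) := by
            intro t h1 h2
            rw [← hYM t h1, ← hYM (t+p) (by omega)]
            exact hov' t h2
          have E : ∀ s, 1 ≤ 2*s → 2*s ≤ p → z s = 1 - z (s+m) := by
            intro s h1 h2
            have ht := Hm (2*s) h1 h2
            rw [show 2*s + p = 2*(s+m)+1 by omega, mu_two, mu_odd] at ht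
            exact ht
          have O : ∀ s, 1 ≤ 2*s+1 → 2*s+1 ≤ p → z (s+m+1) = 1 - z s := by
            intro s h1 h2
            have ht := Hm (2*s+1) h1 h2
            rw [show 2*s+1+p = 2*(s+m+1) by omega, mu_odd, mu_two] at ht
            exact ht.symm
          have h1 : z (m+1) = z (m+2) := by
            have e1 := E 1 (by omega) (by omega)
            have o1 := O 1 (by omega) (by omega)
            have h := (o1.trans (fin2_swap e1).symm).symm
            rw [show 1+m+1 = m+2 by omega] at h
            rw [show 1+m = m+1 by omega] at h
            exact h
          have h2 : z (m+2) = z (m+3) := by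
            have e1 := E 2 (by omega) (by omega)
            have o1 := O 2 (by omega) (by omega)
            have h := (o1.trans (fin2_swap e1).symm).symm
            rw [show 2+m+1 = m+3 by omega] at h
            rw [show 2+m = m+2 by omega] at h
            exact h
          apply (overlapFree_iff z).mp hzf (m+1) 1 one_pos
          intro j hj
          interval_cases j
          · simpa using h1
          · rw [show m+1+1 = m+2 by omega, show m+1+1+1 = m+3 by omega]
            exact h2
    · apply hM i p hp
      intro j hj
      rw [← hYM (i+j) (by omega), ← hYM (i+j+p) (by omega)]
      exact hov j hj
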